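/- Let M₀ be the structure whose universe is ^{ω≥}2 (the set of binary sequences of length at most ω), with unary predicates P^{M₀} = ^{ω>}2 (the finite binary sequences) and Q^{M₀} = ^ω2 (the infinite binary sequences), and binary relation R^{M₀} = {(a,b) : a ∈ ^ω2, b ∈ ^{ω>}2, and b is a proper initial segment of a}. Let T = Th(M₀) and let φ(x,y) be the atomic formula R(x,y). Then T is a complete first-order theory, the pair (T,φ) has SOP₂, and the pair (T,φ) does not have SOP₃. -/

import Mathlib

open FirstOrder Cardinal

namespace Shelah1064

/-! ### The structure `M₀` on `^{ω≥}2` with predicates `P`, `Q` and relation `R` -/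

inductive PQRRel : ℕ → Type
  | P : PQRRel 1
  | Q : PQRRel 1
  | R : PQRRel 2

/-- The vocabulary `τ = {P, Q, R}`. -/
def LPQR : Language := ⟨fun _ => Empty, PQRRel⟩

/-- The universe `^{ω≥}2`: binary sequences of length at most `ω`. -/
def BinSeqs : Type := List Bool ⊕ (ℕ → Bool)

/-- `b` is a (proper) initial segment of the infinite sequence `f`. -/
def IsProperInit (b : List Bool) (f : ℕ → Bool) : Prop :=
  ∀ (k : ℕ) (h : k < b.length), f k = b.get ⟨k, h⟩

instance : LPQR.Structure BinSeqs where
  funMap := fun F _ => F.elim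
  RelMap := fun {_} r x =>
    match r with
    | .P => ∃ l : List Bool, x 0 = Sum.inl l
    | .Q => ∃ f : ℕ → Bool, x 0 = Sum.inr f
    | .R => ∃ (f : ℕ → Bool) (l : List Bool),
        x 0 = Sum.inr f ∧ x 1 = Sum.inl l ∧ IsProperInit l f

/-- The theory `T = Th(M₀)`. -/
def TPQR : LPQR.Theory := LPQR.completeTheory BinSeqs

/-- The atomic formula `φ(x,y) = R(x,y)`. -/
def phiR : LPQR.Formula (Fin 1 ⊕ Fin 1) :=
  FirstOrder.Language.Relations.formula₂ (L := LPQR) (PQRRel.R : LPQR.Relations 2)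
    (FirstOrder.Language.Term.var (Sum.inl 0)) (FirstOrder.Language.Term.var (Sum.inr 0))

/-! ### SOP₂ and SOP₃ for a pair `(T, φ(x̄,ȳ))` with `ℓ(x̄) = ℓ(ȳ) = n` -/

/-- `M` is a model of `T` containing an increasing `φ`-chain `⟨ā_k : k < ω⟩`. -/
def SOP3Chain {L : Language} (Tth : L.Theory) {n : ℕ} (φ : L.Formula (Fin n ⊕ Fin n))
    (M : Type*) [L.Structure M] : Prop :=
  M ⊨ Tth ∧ ∃ a : ℕ → Fin n → M, ∀ k m : ℕ, k < m → φ.Realize (Sum.elim (a k) (a m))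

/-- In the model `M` of `T` there is no `φ`-loop of length `1`, `2` or `3`. -/
def SOP3NoLoops {L : Language} (Tth : L.Theory) {n : ℕ} (φ : L.Formula (Fin n ⊕ Fin n))
    (M : Type*) [L.Structure M] : Prop :=
  M ⊨ Tth →
    (¬ ∃ x : Fin n → M, φ.Realize (Sum.elim x x)) ∧
    (¬ ∃ x₀ x₁ : Fin n → M, φ.Realize (Sum.elim x₀ x₁) ∧ φ.Realize (Sum.elim x₁ x₀)) ∧
    (¬ ∃ x₀ x₁ x₂ : Fin n → M, φ.Realize (Sum.elim x₀ x₁) ∧ φ.Realize (Sum.elim x₁ x₂) ∧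
        φ.Realize (Sum.elim x₂ x₀))

/-- The pair `(T, φ)` has `SOP₃`. -/
def SOP3 {L : Language} (Tth : L.Theory) {n : ℕ} (φ : L.Formula (Fin n ⊕ Fin n)) : Prop :=
  (∃ (M : Type) (iM : L.Structure M), @SOP3Chain L Tth n φ M iM) ∧
  ∀ (M : Type) (iM : L.Structure M), @SOP3NoLoops L Tth n φ M iM

/-- `M` is a model of `T` with a tree of tuples `⟨ā_η : η ∈ ^{ω>}2⟩` as in `SOP₂`: along
every branch the `φ`-instances are finitely satisfiable, while instances at incomparable
nodes are jointly unsatisfiable. -/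
def SOP2Witness {L : Language} (Tth : L.Theory) {n : ℕ} (φ : L.Formula (Fin n ⊕ Fin n))
    (M : Type*) [L.Structure M] : Prop :=
  M ⊨ Tth ∧ ∃ a : List Bool → Fin n → M,
    (∀ η : ℕ → Bool, ∀ s : Finset ℕ, ∃ x : Fin n → M,
      ∀ k ∈ s, φ.Realize (Sum.elim x (a (List.ofFn fun i : Fin k => η i)))) ∧
    (∀ η ν : List Bool, ¬ η <+: ν → ¬ ν <+: η →
      ¬ ∃ x : Fin n → M, φ.Realize (Sum.elim x (a η)) ∧ φ.Realize (Sum.elim x (a ν)))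

/-- The pair `(T, φ)` has `SOP₂`. -/
def SOP2 {L : Language} (Tth : L.Theory) {n : ℕ} (φ : L.Formula (Fin n ⊕ Fin n)) : Prop :=
  ∃ (M : Type) (iM : L.Structure M), @SOP2Witness L Tth n φ M iM

/-- `T = Th(M₀)` is a complete first-order theory, the pair `(T, R(x,y))`
has `SOP₂`, and it does not have `SOP₃`. -/
instance : Nonempty BinSeqs := ⟨Sum.inl []⟩

lemma relMap_R {M : Type*} [iM : LPQR.Structure M] (u v : M) :
    iM.RelMap PQRRel.R ![u, v] =
      Language.Structure.RelMap (L := LPQR) (M := M) PQRRel.R ![u, v] := rfl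

lemma relMap_R_binSeqs (u v : BinSeqs) :
    Language.Structure.RelMap (L := LPQR) (M := BinSeqs) PQRRel.R ![u, v] ↔
      ∃ (f : ℕ → Bool) (l : List Bool),
        u = Sum.inr f ∧ v = Sum.inl l ∧ IsProperInit l f :=
  Iff.rfl

lemma realize_phiR {M : Type*} [LPQR.Structure M] (x y : Fin 1 → M) :
    phiR.Realize (Sum.elim x y) ↔
      Language.Structure.RelMap (L := LPQR) (M := M) PQRRel.R ![x 0, y 0] := by
  simp [phiR, Language.Formula.realize_rel₂]
  exact Language.Formula.realize_rel₂

/-- The sentence `∀ v₀ v₁ v₂, ¬(R(v₀,v₁) ∧ R(v₁,v₂))`. -/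
def noChain3 : LPQR.Sentence :=
  ((Language.Relations.boundedFormula₂ (L := LPQR) (α := Empty) (n := 3) PQRRel.R
      (Language.Term.var (Sum.inr 0)) (Language.Term.var (Sum.inr 1)) ⊓
    Language.Relations.boundedFormula₂ (L := LPQR) (α := Empty) (n := 3) PQRRel.R
      (Language.Term.var (Sum.inr 1)) (Language.Term.var (Sum.inr 2))).not).alls

lemma realize_noChain3 {M : Type*} [LPQR.Structure M] :
    (M ⊨ noChain3) ↔ ∀ v : Fin 3 → M,
      ¬ (Language.Structure.RelMap (L := LPQR) (M := M) PQRRel.R ![v 0, v 1] ∧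
         Language.Structure.RelMap (L := LPQR) (M := M) PQRRel.R ![v 1, v 2]) := by
  simp [noChain3, Language.Sentence.Realize,
    Language.BoundedFormula.realize_alls, Language.BoundedFormula.realize_not,
    Language.BoundedFormula.realize_inf, Language.BoundedFormula.realize_rel₂]
  exact forall_congr' fun _ => imp_congr Language.BoundedFormula.realize_rel₂
    (not_congr Language.BoundedFormula.realize_rel₂)

lemma binSeqs_noChain3 : (BinSeqs : Type) ⊨ noChain3 := by
  rw [realize_noChain3]
  intro v hv
  obtain ⟨⟨f, l, hv0, hv1, -⟩, ⟨f', l', hv1', -, -⟩⟩ :=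
    And.intro ((relMap_R_binSeqs _ _).1 hv.1) ((relMap_R_binSeqs _ _).1 hv.2)
  rw [hv1] at hv1'
  exact Sum.inl_ne_inr hv1'

lemma prefix_of_isProperInit {l l' : List Bool} {f : ℕ → Bool}
    (h : IsProperInit l f) (h' : IsProperInit l' f) (hle : l.length ≤ l'.length) :
    l <+: l' := by
  rw [List.prefix_iff_eq_take]
  apply List.ext_get (by simp [Nat.min_eq_left hle])
  intro n h1 h2
  have e1 := h n h1
  have e2 := h' n (lt_of_lt_of_le h1 hle)
  have ht : (l'.take l.length).get ⟨n, h2⟩ = l'.get ⟨n, lt_of_lt_of_le h1 hle⟩ := by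
    simp [List.get_eq_getElem, List.getElem_take]
  rw [ht]
  exact e1.symm.trans e2

theorem tpqr_complete_sop2_not_sop3 :
    TPQR.IsComplete ∧ SOP2 TPQR phiR ∧ ¬ SOP3 TPQR phiR := by
  have hmodel : (BinSeqs : Type) ⊨ TPQR :=
    show BinSeqs ⊨ LPQR.completeTheory BinSeqs from inferInstance
  refine ⟨Language.completeTheory.isComplete _ _, ?_, ?_⟩
  · -- SOP₂
    refine ⟨BinSeqs, inferInstance, hmodel, fun l _ => Sum.inl l, ?_, ?_⟩
    · intro η s
      refine ⟨fun _ => Sum.inr η, fun k _ => ?_⟩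
      apply (realize_phiR _ _).2
      apply (relMap_R_binSeqs _ _).2
      exact ⟨η, List.ofFn fun i : Fin k => η i, rfl, rfl, fun k' hk' => by simp⟩
    · rintro η ν hην hνη ⟨x, hx, hx'⟩
      replace hx := (realize_phiR _ _).1 hx
      replace hx' := (realize_phiR _ _).1 hx'
      replace hx := (relMap_R_binSeqs _ _).1 hx
      replace hx' := (relMap_R_binSeqs _ _).1 hx'
      obtain ⟨f, l, hf, hl, hinit⟩ := hx
      obtain ⟨f', l', hf', hl', hinit'⟩ := hx'
      rw [hf] at hf'
      cases Sum.inr.inj hf'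
      cases Sum.inl.inj hl
      cases Sum.inl.inj hl'
      rcases le_total η.length ν.length with h | h
      · exact hην (prefix_of_isProperInit hinit hinit' h)
      · exact hνη (prefix_of_isProperInit hinit' hinit h)
  · -- ¬ SOP₃
    rintro ⟨⟨M, iM, hM, a, ha⟩, -⟩
    have hσ : M ⊨ noChain3 :=
      hM.realize_of_mem noChain3 (Language.mem_completeTheory.2 binSeqs_noChain3)
    rw [realize_noChain3] at hσ
    refine hσ ![a 0 0, a 1 0, a 2 0] ⟨?_, ?_⟩
    · have := (realize_phiR (a 0) (a 1)).1 (ha 0 1 (by norm_num))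
      simpa using this
    · have := (realize_phiR (a 1) (a 2)).1 (ha 1 2 (by norm_num))
      simpa using this

end Shelah1064
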